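/- Let A ∈ ℂ^{m×n}, W ∈ ℂ^{n×m} nonzero, with W-weighted Drazin inverse A^{d,W} and Moore-Penrose inverse A†. Then X = A† A W A^{d,W} W A A† satisfies: XAX = X, AX = A W A^{d,W} W A A†, and XA = A† A W A^{d,W} W A; moreover X is the unique matrix satisfying these three equations. -/

import Mathlib

open Matrix

/-- The four Penrose equations: `X` is the Moore–Penrose inverse of `A`. -/
def IsMP {p q : ℕ} (A : Matrix (Fin p) (Fin q) ℂ) (X : Matrix (Fin q) (Fin p) ℂ) : Prop :=
  A * X * A = A ∧ X * A * X = X ∧ (A * X)ᴴ = A * X ∧ (X * A)ᴴ = X * A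

/-- `k` is the index of the square matrix `A`: the least `k` with
`rank (A^(k+1)) = rank (A^k)`. -/
def IsIndex {p : ℕ} (A : Matrix (Fin p) (Fin p) ℂ) (k : ℕ) : Prop :=
  (A ^ (k + 1)).rank = (A ^ k).rank ∧ ∀ j < k, (A ^ (j + 1)).rank ≠ (A ^ j).rank

/-- `X` satisfies the Drazin equations for `A` with exponent `k`. -/
def IsDrazin {p : ℕ} (A : Matrix (Fin p) (Fin p) ℂ) (k : ℕ)
    (X : Matrix (Fin p) (Fin p) ℂ) : Prop :=
  A ^ (k + 1) * X = A ^ k ∧ X * A * X = X ∧ A * X = X * A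

/-- `X` satisfies the W-weighted Drazin equations for `A` with exponent `k`. -/
def IsWDrazin {m n : ℕ} (A : Matrix (Fin m) (Fin n) ℂ) (W : Matrix (Fin n) (Fin m) ℂ)
    (k : ℕ) (X : Matrix (Fin m) (Fin n) ℂ) : Prop :=
  (A * W) ^ (k + 1) * X * W = (A * W) ^ k ∧ X * W * A * W * X = X ∧
    A * W * X = X * W * A

theorem wcmp_props {m n : ℕ} (A Dw : Matrix (Fin m) (Fin n) ℂ)
    (W : Matrix (Fin n) (Fin m) ℂ) (P : Matrix (Fin n) (Fin m) ℂ) (kWA kAW k : ℕ)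
    (hW : W ≠ 0)
    (hkWA : IsIndex (W * A) kWA) (hkAW : IsIndex (A * W) kAW)
    (hk : k = max kWA kAW)
    (hDw : IsWDrazin A W k Dw) (hP : IsMP A P) :
    ((P * A * W * Dw * W * A * P) * A * (P * A * W * Dw * W * A * P) =
        P * A * W * Dw * W * A * P ∧
      A * (P * A * W * Dw * W * A * P) = A * W * Dw * W * A * P ∧
      (P * A * W * Dw * W * A * P) * A = P * A * W * Dw * W * A) ∧
    ∀ Y : Matrix (Fin n) (Fin m) ℂ,
      (Y * A * Y = Y ∧ A * Y = A * W * Dw * W * A * P ∧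
        Y * A = P * A * W * Dw * W * A) →
      Y = P * A * W * Dw * W * A * P := by
  have hAP : A * (P * A) = A := by rw [← Matrix.mul_assoc, hP.1]
  have hAP' : ∀ M : Matrix (Fin n) (Fin m) ℂ, A * (P * (A * M)) = A * M := by
    intro M; rw [← Matrix.mul_assoc, ← Matrix.mul_assoc, hP.1]
  have hD' : ∀ M : Matrix (Fin n) (Fin m) ℂ,
      Dw * (W * (A * (W * (Dw * M)))) = Dw * M := by
    intro M
    have h := hDw.2.1
    calc Dw * (W * (A * (W * (Dw * M)))) = (Dw * W * A * W * Dw) * M := by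
          simp only [Matrix.mul_assoc]
      _ = Dw * M := by rw [h]
  refine ⟨⟨?_, ?_, ?_⟩, ?_⟩
  · simp only [Matrix.mul_assoc]
    rw [hAP', hAP']
    have := hD' (W * (A * P))
    rw [this]
  · simp only [Matrix.mul_assoc]
    rw [hAP']
  · simp only [Matrix.mul_assoc]
    rw [hAP]
  · rintro Y ⟨hY1, hY2, hY3⟩
    calc Y = Y * A * Y := hY1.symm
      _ = P * A * W * Dw * W * A * Y := by rw [hY3]
      _ = P * A * W * Dw * W * (A * Y) := by rw [Matrix.mul_assoc]
      _ = P * A * W * Dw * W * (A * W * Dw * W * A * P) := by rw [hY2]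
      _ = P * A * W * Dw * W * A * P := by
          have := hD' (W * (A * P))
          simp only [Matrix.mul_assoc] at this ⊢
          rw [this]
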